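/- Let Γ be a δ-hyperbolic group with word metric d_w acting on its Gromov boundary ∂Γ. Let x ≠ y in ∂Γ and let (γ_i) be a sequence in Γ tending to infinity such that (γ_i·x, γ_i·y) → (x', y') in ∂Γ × ∂Γ. Then, after passing to a subsequence if necessary, the sequence γ_i (viewed as points of Γ) converges in Γ ∪ ∂Γ to either x' or y'. -/

import Mathlib

open Filter

variable {Γ : Type*} [Group Γ]

/-- Word length with respect to a generating set S. -/
noncomputable def wordLength (S : Set Γ) (γ : Γ) : ℕ :=
  sInf {n | ∃ l : List Γ, (∀ s ∈ l, s ∈ S) ∧ l.length = n ∧ l.prod = γ}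

/-- The left-invariant word metric. -/
noncomputable def wdist (S : Set Γ) (a b : Γ) : ℕ := wordLength S (a⁻¹ * b)

/-- A discrete geodesic ray in (Γ, d_w). -/
def IsGeodesicRay (S : Set Γ) (ρ : ℕ → Γ) : Prop :=
  ∀ m n : ℕ, wdist S (ρ m) (ρ n) = max m n - min m n

/-- Two rays define the same boundary point iff they stay at bounded distance. -/
def RayEquiv (S : Set Γ) (ρ σ : ℕ → Γ) : Prop :=
  ∃ C : ℕ, ∀ n, wdist S (ρ n) (σ n) ≤ C

/-- Gromov product based at the identity, with respect to the word metric. -/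
noncomputable def gp (S : Set Γ) (a b : Γ) : ℝ :=
  ((wdist S 1 a : ℝ) + (wdist S 1 b : ℝ) - (wdist S a b : ℝ)) / 2

/-- Gromov product of a group element with a boundary point represented by a ray. -/
noncomputable def elemRayGP (S : Set Γ) (a : Γ) (σ : ℕ → Γ) : EReal :=
  liminf (fun n => ((gp S a (σ n) : ℝ) : EReal)) atTop

/-- A sequence of group elements converges to the boundary point represented by the
ray σ iff the Gromov products with σ tend to infinity. -/
def ConvToBoundary (S : Set Γ) (u : ℕ → Γ) (σ : ℕ → Γ) : Prop :=
  Tendsto (fun i => elemRayGP S (u i) σ) atTop (nhds ⊤)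

/-- Gromov product of two boundary points represented by rays. -/
noncomputable def rayGP (S : Set Γ) (ρ σ : ℕ → Γ) : EReal :=
  liminf (fun n => ((gp S (ρ n) (σ n) : ℝ) : EReal)) atTop

/-- A sequence of boundary points (given by rays) converges to the boundary point σ. -/
def RaySeqConv (S : Set Γ) (x : ℕ → (ℕ → Γ)) (σ : ℕ → Γ) : Prop :=
  Tendsto (fun i => rayGP S (x i) σ) atTop (nhds ⊤)

/-! ### Auxiliary lemmas -/

section Aux

variable (S : Set Γ)

lemma wl_le {γ : Γ} (l : List Γ) (hl : ∀ s ∈ l, s ∈ S) (hprod : l.prod = γ) :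
    wordLength S γ ≤ l.length :=
  Nat.sInf_le ⟨l, hl, rfl, hprod⟩

lemma wl_spec (hgen : ∀ γ : Γ, ∃ l : List Γ, (∀ s ∈ l, s ∈ S) ∧ l.prod = γ) (γ : Γ) :
    ∃ l : List Γ, (∀ s ∈ l, s ∈ S) ∧ l.length = wordLength S γ ∧ l.prod = γ := by
  have hne : {n | ∃ l : List Γ, (∀ s ∈ l, s ∈ S) ∧ l.length = n ∧ l.prod = γ}.Nonempty := by
    obtain ⟨l, hl, hp⟩ := hgen γ
    exact ⟨l.length, l, hl, rfl, hp⟩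
  exact Nat.sInf_mem hne

lemma wl_one : wordLength S (1 : Γ) = 0 :=
  Nat.le_zero.mp (wl_le S [] (by simp) (by simp))

variable (hsymm : ∀ s ∈ S, s⁻¹ ∈ S)
variable (hgen : ∀ γ : Γ, ∃ l : List Γ, (∀ s ∈ l, s ∈ S) ∧ l.prod = γ)

include hsymm hgen in
lemma wl_inv_le (γ : Γ) : wordLength S γ⁻¹ ≤ wordLength S γ := by
  obtain ⟨l, hl, hlen, hprod⟩ := wl_spec S hgen γ
  calc wordLength S γ⁻¹ ≤ ((l.map fun x => x⁻¹).reverse).length := by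
        refine wl_le S _ ?_ ?_
        · intro s hs
          simp only [List.mem_reverse, List.mem_map] at hs
          obtain ⟨x, hx, rfl⟩ := hs
          exact hsymm x (hl x hx)
        · rw [← List.prod_inv_reverse, hprod]
    _ = wordLength S γ := by simp [hlen]

include hsymm hgen in
lemma wl_inv (γ : Γ) : wordLength S γ⁻¹ = wordLength S γ := by
  refine le_antisymm (wl_inv_le S hsymm hgen γ) ?_
  have := wl_inv_le S hsymm hgen γ⁻¹
  simpa using this

include hgen in
lemma wl_mul (g h : Γ) : wordLength S (g * h) ≤ wordLength S g + wordLength S h := by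
  obtain ⟨l1, h1, len1, p1⟩ := wl_spec S hgen g
  obtain ⟨l2, h2, len2, p2⟩ := wl_spec S hgen h
  calc wordLength S (g * h) ≤ (l1 ++ l2).length := by
        refine wl_le S _ ?_ ?_
        · intro s hs
          rcases List.mem_append.mp hs with h | h
          exacts [h1 s h, h2 s h]
        · rw [List.prod_append, p1, p2]
    _ = wordLength S g + wordLength S h := by simp [len1, len2]

lemma wd_self (a : Γ) : wdist S a a = 0 := by
  simp [wdist, wl_one]

include hsymm hgen in
lemma wd_symm (a b : Γ) : wdist S a b = wdist S b a := by
  unfold wdist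
  rw [← wl_inv S hsymm hgen (b⁻¹ * a)]
  congr 1
  group

include hgen in
lemma wd_tri (a b c : Γ) : wdist S a c ≤ wdist S a b + wdist S b c := by
  unfold wdist
  have h : a⁻¹ * c = (a⁻¹ * b) * (b⁻¹ * c) := by group
  rw [h]
  exact wl_mul S hgen _ _

lemma wd_mul_left (g a b : Γ) : wdist S (g * a) (g * b) = wdist S a b := by
  unfold wdist
  congr 1
  group

include hgen in
lemma D_tri (a b c : Γ) : (wdist S a c : ℝ) ≤ (wdist S a b : ℝ) + (wdist S b c : ℝ) := by
  exact_mod_cast wd_tri S hgen a b c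

include hsymm hgen in
lemma D_symm (a b : Γ) : (wdist S a b : ℝ) = (wdist S b a : ℝ) := by
  exact_mod_cast wd_symm S hsymm hgen a b

include hsymm hgen in
lemma gp_nonneg (a b : Γ) : 0 ≤ gp S a b := by
  have tri := D_tri S hgen a 1 b
  have hs := D_symm S hsymm hgen a 1
  unfold gp
  linarith

include hgen in
lemma gp_le_left (a b : Γ) : gp S a b ≤ (wdist S 1 a : ℝ) := by
  have tri := D_tri S hgen 1 a b
  unfold gp
  linarith

include hsymm hgen in
lemma gp_comm (a b : Γ) : gp S a b = gp S b a := by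
  unfold gp
  rw [D_symm S hsymm hgen a b]
  ring

include hsymm hgen in
/-- Bounds for the distance from the identity to points on a geodesic ray. -/
lemma wd_ray_bounds {ρ : ℕ → Γ} (hρ : IsGeodesicRay S ρ) (n : ℕ) :
    (n : ℝ) - (wdist S 1 (ρ 0) : ℝ) ≤ (wdist S 1 (ρ n) : ℝ) ∧
      (wdist S 1 (ρ n) : ℝ) ≤ (n : ℝ) + (wdist S 1 (ρ 0) : ℝ) := by
  have h0 : wdist S (ρ 0) (ρ n) = n := by simpa using hρ 0 n
  have t1 := D_tri S hgen (ρ 0) 1 (ρ n)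
  have t2 := D_tri S hgen 1 (ρ 0) (ρ n)
  have hs := D_symm S hsymm hgen (ρ 0) 1
  rw [h0] at t1 t2
  constructor <;> linarith

include hsymm hgen in
/-- Gromov product of two points on a geodesic ray. -/
lemma gp_ray {ρ : ℕ → Γ} (hρ : IsGeodesicRay S ρ) (n m : ℕ) :
    ((min n m : ℕ) : ℝ) - (wdist S 1 (ρ 0) : ℝ) ≤ gp S (ρ n) (ρ m) := by
  have hn := wd_ray_bounds S hsymm hgen hρ n
  have hm := wd_ray_bounds S hsymm hgen hρ m
  have hd : (wdist S (ρ n) (ρ m) : ℝ) = ((max n m : ℕ) : ℝ) - ((min n m : ℕ) : ℝ) := by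
    rw [hρ n m]
    exact_mod_cast Nat.cast_sub (min_le_max)
  have hsum : ((max n m : ℕ) : ℝ) + ((min n m : ℕ) : ℝ) = (n : ℝ) + (m : ℝ) := by
    exact_mod_cast congrArg (Nat.cast : ℕ → ℝ) (max_add_min n m)
  unfold gp
  rw [hd]
  linarith [hn.1, hm.1]

include hsymm hgen in
/-- The fundamental identity relating Gromov products at `1` and at `p`. -/
lemma gp_identity (p a b : Γ) :
    gp S (p * a) p + gp S p (p * b) =
      (wordLength S p : ℝ) + gp S (p * a) (p * b) - gp S a b := by
  have e1 : wdist S (p * a) p = wdist S 1 a := by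
    calc wdist S (p * a) p = wdist S (p * a) (p * 1) := by rw [mul_one]
      _ = wdist S a 1 := wd_mul_left S p a 1
      _ = wdist S 1 a := wd_symm S hsymm hgen a 1
  have e2 : wdist S p (p * b) = wdist S 1 b := by
    calc wdist S p (p * b) = wdist S (p * 1) (p * b) := by rw [mul_one]
      _ = wdist S 1 b := wd_mul_left S p 1 b
  have e3 : wdist S (p * a) (p * b) = wdist S a b := wd_mul_left S p a b
  have e5 : wdist S 1 p = wordLength S p := by simp [wdist]
  unfold gp
  rw [e1, e2, e3, e5]
  ring

include hsymm hgen in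
/-- If the rays are inequivalent then their Gromov products stay bounded. -/
lemma gp_bound {δ : ℝ} (hδ : 0 ≤ δ)
    (hhyp : ∀ a b c : Γ, min (gp S a c) (gp S c b) - δ ≤ gp S a b)
    {ρx ρy : ℕ → Γ} (hρx : IsGeodesicRay S ρx) (hρy : IsGeodesicRay S ρy)
    (hxy : ¬ RayEquiv S ρx ρy) :
    ∃ K : ℝ, 0 ≤ K ∧ ∀ n, gp S (ρx n) (ρy n) ≤ K := by
  by_contra hK
  push_neg at hK
  apply hxy
  set cx := (wdist S 1 (ρx 0) : ℝ) with hcx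
  set cy := (wdist S 1 (ρy 0) : ℝ) with hcy
  have hcx0 : 0 ≤ cx := by positivity
  have hcy0 : 0 ≤ cy := by positivity
  refine ⟨⌈cx + cy + 2 * max cx cy + 4 * δ⌉₊, fun m => ?_⟩
  obtain ⟨n, hn⟩ := hK (max 0 ((m : ℝ) + cx)) (le_max_left _ _)
  have hn' : (m : ℝ) + cx < gp S (ρx n) (ρy n) := lt_of_le_of_lt (le_max_right _ _) hn
  -- n is at least m
  have hmn : m ≤ n := by
    have h1 : gp S (ρx n) (ρy n) ≤ (wdist S 1 (ρx n) : ℝ) := gp_le_left S hgen _ _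
    have h2 := (wd_ray_bounds S hsymm hgen hρx n).2
    have : (m : ℝ) < (n : ℝ) := by linarith
    exact_mod_cast this.le
  have g1 : (m : ℝ) - cx ≤ gp S (ρx m) (ρx n) := by
    have := gp_ray S hsymm hgen hρx m n
    rwa [min_eq_left hmn] at this
  have g2 : (m : ℝ) - cy ≤ gp S (ρy n) (ρy m) := by
    have := gp_ray S hsymm hgen hρy n m
    rwa [min_eq_right hmn] at this
  have h3 := hhyp (ρx n) (ρy m) (ρy n)
  have h4 := hhyp (ρx m) (ρy m) (ρx n)
  set C := max cx cy with hC
  have hxC : cx ≤ C := le_max_left _ _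
  have hyC : cy ≤ C := le_max_right _ _
  have m3 : (m : ℝ) - C - δ ≤ gp S (ρx n) (ρy m) := by
    have : (m : ℝ) - C ≤ min (gp S (ρx n) (ρy n)) (gp S (ρy n) (ρy m)) :=
      le_min (by linarith) (by linarith)
    linarith
  have m4 : (m : ℝ) - C - 2 * δ ≤ gp S (ρx m) (ρy m) := by
    have : (m : ℝ) - C - δ ≤ min (gp S (ρx m) (ρx n)) (gp S (ρx n) (ρy m)) :=
      le_min (by linarith) (by linarith)
    linarith
  -- now bound the distance
  have b1 := (wd_ray_bounds S hsymm hgen hρx m).2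
  have b2 := (wd_ray_bounds S hsymm hgen hρy m).2
  have key : (wdist S (ρx m) (ρy m) : ℝ) ≤ cx + cy + 2 * C + 4 * δ := by
    have hgp : gp S (ρx m) (ρy m) =
        ((wdist S 1 (ρx m) : ℝ) + (wdist S 1 (ρy m) : ℝ) - (wdist S (ρx m) (ρy m) : ℝ)) / 2 :=
      rfl
    have := m4
    rw [hgp] at this
    linarith
  have := key.trans (Nat.le_ceil _)
  exact_mod_cast this

end Aux

/-- If x ≠ y in ∂Γ and γ_i → ∞ in a hyperbolic group Γ with
(γ_i·x, γ_i·y) → (x', y'), then along a subsequence the γ_i converge to x' or y'. -/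
theorem stmt9 (S : Set Γ) (hfin : S.Finite) (hsymm : ∀ s ∈ S, s⁻¹ ∈ S)
    (hgen : ∀ γ : Γ, ∃ l : List Γ, (∀ s ∈ l, s ∈ S) ∧ l.prod = γ)
    (δ : ℝ) (hδ : 0 ≤ δ)
    (hhyp : ∀ a b c : Γ, min (gp S a c) (gp S c b) - δ ≤ gp S a b)
    (ρx ρy : ℕ → Γ) (hρx : IsGeodesicRay S ρx) (hρy : IsGeodesicRay S ρy)
    (hxy : ¬ RayEquiv S ρx ρy)
    (ρx' ρy' : ℕ → Γ) (hρx' : IsGeodesicRay S ρx') (hρy' : IsGeodesicRay S ρy')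
    (γ : ℕ → Γ) (hγ : Tendsto (fun i => wordLength S (γ i)) atTop atTop)
    (hx : RaySeqConv S (fun i => fun n => γ i * ρx n) ρx')
    (hy : RaySeqConv S (fun i => fun n => γ i * ρy n) ρy') :
    ∃ φ : ℕ → ℕ, StrictMono φ ∧
      (ConvToBoundary S (fun i => γ (φ i)) ρx' ∨
       ConvToBoundary S (fun i => γ (φ i)) ρy') := by
  classical
  obtain ⟨K, hK0, hK⟩ := gp_bound S hsymm hgen hδ hhyp hρx hρy hxy
  set a : ℕ → EReal := fun i => elemRayGP S (γ i) ρx' with ha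
  set b : ℕ → EReal := fun i => elemRayGP S (γ i) ρy' with hb
  set cx' : ℝ := (wdist S 1 (ρx' 0) : ℝ) with hcx'
  set cy' : ℝ := (wdist S 1 (ρy' 0) : ℝ) with hcy'
  have hxT : Tendsto (fun i => rayGP S (fun n => γ i * ρx n) ρx') atTop (nhds ⊤) := hx
  have hyT : Tendsto (fun i => rayGP S (fun n => γ i * ρy n) ρy') atTop (nhds ⊤) := hy
  -- main estimate
  have star : ∀ M : ℝ, ∀ᶠ i in atTop, (M : EReal) < max (a i) (b i) := by
    intro M
    set T : ℝ := M + 1 + 2 * δ with hT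
    have hγ' : ∀ᶠ i in atTop, 2 * T + K ≤ (wordLength S (γ i) : ℝ) := by
      filter_upwards [hγ.eventually_ge_atTop ⌈2 * T + K⌉₊] with i hi
      calc 2 * T + K ≤ (⌈2 * T + K⌉₊ : ℝ) := Nat.le_ceil _
        _ ≤ (wordLength S (γ i) : ℝ) := by exact_mod_cast hi
    have hgt : ((T : ℝ) : EReal) < ⊤ := EReal.coe_lt_top T
    filter_upwards [hγ', hxT.eventually (eventually_gt_nhds hgt),
      hyT.eventually (eventually_gt_nhds hgt)] with i hγi hxi hyi
    simp only [rayGP] at hxi hyi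
    have hxn : ∀ᶠ n in atTop, ((T : ℝ) : EReal) < ((gp S (γ i * ρx n) (ρx' n) : ℝ) : EReal) :=
      eventually_lt_of_lt_liminf hxi
    have hyn : ∀ᶠ n in atTop, ((T : ℝ) : EReal) < ((gp S (γ i * ρy n) (ρy' n) : ℝ) : EReal) :=
      eventually_lt_of_lt_liminf hyi
    have hnn : ∀ᶠ n : ℕ in atTop, T + max cx' cy' ≤ (n : ℝ) := by
      filter_upwards [eventually_ge_atTop ⌈T + max cx' cy'⌉₊] with n hn
      calc T + max cx' cy' ≤ (⌈T + max cx' cy'⌉₊ : ℝ) := Nat.le_ceil _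
        _ ≤ (n : ℝ) := by exact_mod_cast hn
    obtain ⟨n, h1, h2, h3⟩ := (hxn.and (hyn.and hnn)).exists
    rw [EReal.coe_lt_coe_iff] at h1 h2
    set p := γ i with hp
    -- dichotomy via the identity
    have iden := gp_identity S hsymm hgen p (ρx n) (ρy n)
    have hpos : 0 ≤ gp S (p * ρx n) (p * ρy n) := gp_nonneg S hsymm hgen _ _
    have hKn : gp S (ρx n) (ρy n) ≤ K := hK n
    have hsum : 2 * T ≤ gp S (p * ρx n) p + gp S p (p * ρy n) := by linarith
    have dich : T ≤ gp S p (p * ρx n) ∨ T ≤ gp S p (p * ρy n) := by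
      rcases le_total (gp S (p * ρx n) p) (gp S p (p * ρy n)) with h | h
      · exact Or.inr (by linarith)
      · refine Or.inl ?_
        rw [gp_comm S hsymm hgen p (p * ρx n)]
        linarith
    rcases dich with hside | hside
    · -- converges to x'
      refine lt_max_of_lt_left ?_
      have hliminf : ((M + 1 : ℝ) : EReal) ≤ a i := by
        rw [ha]
        simp only [elemRayGP]
        refine le_liminf_of_le (by isBoundedDefault) ?_
        filter_upwards [eventually_ge_atTop n] with m hm
        rw [EReal.coe_le_coe_iff]
        have g1 : (n : ℝ) - cx' ≤ gp S (ρx' n) (ρx' m) := by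
          have := gp_ray S hsymm hgen hρx' n m
          rwa [min_eq_left hm] at this
        have g1' : T ≤ gp S (ρx' n) (ρx' m) := by
          have : cx' ≤ max cx' cy' := le_max_left _ _
          linarith
        have g2 := hhyp (p * ρx n) (ρx' m) (ρx' n)
        have g2' : T - δ ≤ gp S (p * ρx n) (ρx' m) := by
          have : T ≤ min (gp S (p * ρx n) (ρx' n)) (gp S (ρx' n) (ρx' m)) :=
            le_min h1.le g1'
          linarith
        have g3 := hhyp p (ρx' m) (p * ρx n)
        have : T - δ ≤ min (gp S p (p * ρx n)) (gp S (p * ρx n) (ρx' m)) :=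
          le_min (by linarith) g2'
        linarith
      calc (M : EReal) < ((M + 1 : ℝ) : EReal) := by
            rw [EReal.coe_lt_coe_iff]; linarith
        _ ≤ a i := hliminf
    · -- converges to y'
      refine lt_max_of_lt_right ?_
      have hliminf : ((M + 1 : ℝ) : EReal) ≤ b i := by
        rw [hb]
        simp only [elemRayGP]
        refine le_liminf_of_le (by isBoundedDefault) ?_
        filter_upwards [eventually_ge_atTop n] with m hm
        rw [EReal.coe_le_coe_iff]
        have g1 : (n : ℝ) - cy' ≤ gp S (ρy' n) (ρy' m) := by
          have := gp_ray S hsymm hgen hρy' n m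
          rwa [min_eq_left hm] at this
        have g1' : T ≤ gp S (ρy' n) (ρy' m) := by
          have : cy' ≤ max cx' cy' := le_max_right _ _
          linarith
        have g2 := hhyp (p * ρy n) (ρy' m) (ρy' n)
        have g2' : T - δ ≤ gp S (p * ρy n) (ρy' m) := by
          have : T ≤ min (gp S (p * ρy n) (ρy' n)) (gp S (ρy' n) (ρy' m)) :=
            le_min h2.le g1'
          linarith
        have g3 := hhyp p (ρy' m) (p * ρy n)
        have : T - δ ≤ min (gp S p (p * ρy n)) (gp S (p * ρy n) (ρy' m)) :=
          le_min (by linarith) g2'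
        linarith
      calc (M : EReal) < ((M + 1 : ℝ) : EReal) := by
            rw [EReal.coe_lt_coe_iff]; linarith
        _ ≤ b i := hliminf
  -- extract the subsequence
  by_cases hA : {i | b i ≤ a i}.Infinite
  · refine ⟨Nat.nth (fun i => b i ≤ a i), Nat.nth_strictMono hA, Or.inl ?_⟩
    show Tendsto (fun i => a (Nat.nth (fun i => b i ≤ a i) i)) atTop (nhds ⊤)
    rw [EReal.tendsto_nhds_top_iff_real]
    intro M
    obtain ⟨N, hN⟩ := (eventually_atTop).mp (star M)
    filter_upwards [eventually_ge_atTop N] with i hi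
    set j := Nat.nth (fun i => b i ≤ a i) i with hj
    have hmem : b j ≤ a j := Nat.nth_mem_of_infinite hA i
    have hge : N ≤ j := hi.trans (Nat.nth_strictMono hA).le_apply
    have := hN j hge
    rwa [max_eq_left hmem] at this
  · have hfinA : {i | b i ≤ a i}.Finite := Set.not_infinite.mp hA
    have hcompl : ∀ᶠ i in atTop, ¬ (b i ≤ a i) := by
      rw [← Nat.cofinite_eq_atTop]
      exact hfinA.eventually_cofinite_notMem
    refine ⟨id, strictMono_id, Or.inr ?_⟩
    show Tendsto (fun i => b (id i)) atTop (nhds ⊤)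
    rw [EReal.tendsto_nhds_top_iff_real]
    intro M
    filter_upwards [star M, hcompl] with i h1 h2
    rwa [max_eq_right (le_of_not_ge h2)] at h1
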